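/- Let G be a hypergraph on a finite set V. There exists a polynomial P with rational coefficients such that for every integer N ≥ 1, P(N) equals the number of ⊂-proper N-colourings of G, i.e. the number of maps f : V → {1,…,N} taking at least two distinct values on every nontrivial edge of G. -/
import Mathlib

open Polynomial

/-- Functions with a prescribed kernel setoid are in bijection with embeddings
of the quotient. -/
noncomputable def kerFiberEquiv {α β : Type*} (π : Setoid α) :
    {f : α → β // Setoid.ker f = π} ≃ (Quotient π ↪ β) where
  toFun f := ⟨Quotient.lift f.1 (fun a b h => by
      have h' : Setoid.ker f.1 a b := by rw [f.2]; exact h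
      exact h'), by
    intro x y h
    induction x using Quotient.ind
    induction y using Quotient.ind
    rename_i a b
    refine Quotient.sound ?_
    have h' : Setoid.ker f.1 a b := h
    rw [← f.2]
    exact h'⟩
  invFun g := ⟨fun a => g (Quotient.mk π a), by
    refine Setoid.ext fun a b => ?_
    constructor
    · intro h
      exact Quotient.exact (g.injective h)
    · intro h
      exact congrArg g (Quotient.sound h)⟩
  left_inv f := Subtype.ext (funext fun a => rfl)
  right_inv g := by
    ext x
    induction x using Quotient.ind
    rfl

theorem stmt8 {V : Type*} [Fintype V] (E : Set (Set V))
    (hE0 : ∅ ∈ E) (hE1 : ∀ x : V, {x} ∈ E) :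
    ∃ P : Polynomial ℚ, ∀ N : ℕ, 1 ≤ N →
      P.eval (N : ℚ) =
        Nat.card {f : V → Fin N //
          ∀ e ∈ E, 2 ≤ e.ncard → ∃ x ∈ e, ∃ y ∈ e, f x ≠ f y} := by
  classical
  have hfin : Finite (Setoid V) :=
    Finite.of_injective (fun π : Setoid V => π.r)
      (fun a b h => by cases a; cases b; cases h; rfl)
  haveI : Fintype (Setoid V) := Fintype.ofFinite _
  set good : Setoid V → Prop := fun π =>
    ∀ e ∈ E, 2 ≤ e.ncard → ∃ x ∈ e, ∃ y ∈ e, ¬ π.r x y with hgood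
  haveI : ∀ π : Setoid V, Fintype (Quotient π) := fun π => Fintype.ofFinite _
  refine ⟨∑ π : {π : Setoid V // good π},
      descPochhammer ℚ (Nat.card (Quotient π.1)), fun N _ => ?_⟩
  -- decompose colourings by their kernel
  have e1 : {f : V → Fin N //
      ∀ e ∈ E, 2 ≤ e.ncard → ∃ x ∈ e, ∃ y ∈ e, f x ≠ f y} ≃
      Σ π : {π : Setoid V // good π}, {f : V → Fin N // Setoid.ker f = π.1} :=
    { toFun := fun f => ⟨⟨Setoid.ker f.1, fun e he hc => f.2 e he hc⟩, ⟨f.1, rfl⟩⟩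
      invFun := fun x => ⟨x.2.1, by
        have h := x.1.2
        rw [← x.2.2] at h
        exact fun e he hc => h e he hc⟩
      left_inv := fun f => rfl
      right_inv := fun x => by
        obtain ⟨⟨π, hπ⟩, ⟨f, hf⟩⟩ := x
        dsimp only at hf ⊢
        subst hf
        rfl }
  rw [Nat.card_eq_fintype_card, Fintype.card_congr e1, Fintype.card_sigma]
  have key : ∀ π : {π : Setoid V // good π},
      Fintype.card {f : V → Fin N // Setoid.ker f = π.1} =
        N.descFactorial (Nat.card (Quotient π.1)) := by
    intro π
    rw [Fintype.card_congr (kerFiberEquiv (β := Fin N) π.1),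
      Fintype.card_embedding_eq, Fintype.card_fin, Nat.card_eq_fintype_card]
  simp only [key]
  rw [eval_finset_sum]
  push_cast
  congr 1
  funext π
  simp [descPochhammer_eval_eq_descFactorial]
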